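/- For k odd and n even, the number of maximum non-attacking rook placements on the circular chained board B^∘_{n,k} equals ((n)_{n/2})^k, where (n)_m is the falling factorial n(n-1)···(n-m+1). -/

import Mathlib

/-- Non-attacking rook placement on the linear chained board `B⁻_{n,k}`:
rooks are triples (board, row, column). -/
def LinNonAtt (n k : ℕ) (R : Finset (Fin k × Fin n × Fin n)) : Prop :=
  (∀ r ∈ R, ∀ s ∈ R, r ≠ s → r.1 = s.1 → r.2.1 ≠ s.2.1 ∧ r.2.2 ≠ s.2.2) ∧
  (∀ r ∈ R, ∀ s ∈ R, (r.1 : ℕ) + 1 = (s.1 : ℕ) → r.2.1 ≠ s.2.2)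

/-- Non-attacking rook placement on the circular chained board `B°_{n,k}`. -/
def CircNonAtt (n k : ℕ) (R : Finset (Fin k × Fin n × Fin n)) : Prop :=
  (∀ r ∈ R, ∀ s ∈ R, r ≠ s → r.1 = s.1 → r.2.1 ≠ s.2.1 ∧ r.2.2 ≠ s.2.2) ∧
  (∀ r ∈ R, ∀ s ∈ R, ((r.1 : ℕ) + 1) % k = (s.1 : ℕ) → r.2.1 ≠ s.2.2)

/-- Number of rooks of `R` on board `i`. -/
def bCount {n k : ℕ} (R : Finset (Fin k × Fin n × Fin n)) (i : Fin k) : ℕ :=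
  (R.filter fun r => r.1 = i).card

/-- `a_{i-1}` with the convention `a_0 = 0` (linear case). -/
def prevL {k : ℕ} (a : Fin k → ℕ) (i : Fin k) : ℕ :=
  if i.val = 0 then 0
  else a ⟨i.val - 1, Nat.lt_of_le_of_lt (Nat.sub_le _ _) i.isLt⟩

/-- `a_{i-1}` with cyclic index convention (circular case). -/
def prevC {k : ℕ} (a : Fin k → ℕ) (i : Fin k) : ℕ :=
  a ⟨(i.val + (k - 1)) % k, Nat.mod_lt _ i.pos⟩


namespace CircRook
variable {n k m : ℕ}

def nxt (i : Fin k) : Fin k := ⟨((i : ℕ) + 1) % k, Nat.mod_lt _ i.pos⟩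
def prv (i : Fin k) : Fin k := ⟨((i : ℕ) + (k - 1)) % k, Nat.mod_lt _ i.pos⟩

lemma nxt_prv (i : Fin k) : nxt (prv i) = i := by
  have hk : 0 < k := i.pos
  apply Fin.ext
  show (((i : ℕ) + (k - 1)) % k + 1) % k = i
  rw [Nat.mod_add_mod]
  have h2 : (i : ℕ) + (k - 1) + 1 = i + k := by omega
  rw [h2, Nat.add_mod_right, Nat.mod_eq_of_lt i.isLt]

lemma prv_nxt (i : Fin k) : prv (nxt i) = i := by
  have hk : 0 < k := i.pos
  apply Fin.ext
  show (((i : ℕ) + 1) % k + (k - 1)) % k = i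
  rw [Nat.mod_add_mod]
  have h2 : (i : ℕ) + 1 + (k - 1) = i + k := by omega
  rw [h2, Nat.add_mod_right, Nat.mod_eq_of_lt i.isLt]

lemma circ_cross {R : Finset (Fin k × Fin n × Fin n)} (h : CircNonAtt n k R)
    {r s : Fin k × Fin n × Fin n} (hr : r ∈ R) (hs : s ∈ R) (hrs : s.1 = nxt r.1) :
    r.2.1 ≠ s.2.2 := by
  apply h.2 r hr s hs
  rw [hrs]; rfl

end CircRook

namespace CircRook
variable {n k m : ℕ}

/-- rooks of `R` on board `i`. -/
def bd (R : Finset (Fin k × Fin n × Fin n)) (i : Fin k) : Finset (Fin k × Fin n × Fin n) :=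
  R.filter fun r => r.1 = i

def rowsOf (R : Finset (Fin k × Fin n × Fin n)) (i : Fin k) : Finset (Fin n) :=
  (bd R i).image fun r => r.2.1

def colsOf (R : Finset (Fin k × Fin n × Fin n)) (i : Fin k) : Finset (Fin n) :=
  (bd R i).image fun r => r.2.2

lemma card_rowsOf {R : Finset (Fin k × Fin n × Fin n)} (h : CircNonAtt n k R) (i : Fin k) :
    (rowsOf R i).card = (bd R i).card := by
  apply Finset.card_image_of_injOn
  intro r hr s hs hrs
  simp only [bd, Finset.mem_coe, Finset.mem_filter] at hr hs
  by_contra hne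
  exact ((h.1 r hr.1 s hs.1 hne (hr.2.trans hs.2.symm)).1 hrs).elim

lemma card_colsOf {R : Finset (Fin k × Fin n × Fin n)} (h : CircNonAtt n k R) (i : Fin k) :
    (colsOf R i).card = (bd R i).card := by
  apply Finset.card_image_of_injOn
  intro r hr s hs hrs
  simp only [bd, Finset.mem_coe, Finset.mem_filter] at hr hs
  by_contra hne
  exact ((h.1 r hr.1 s hs.1 hne (hr.2.trans hs.2.symm)).2 hrs).elim

lemma rows_cols_disj {R : Finset (Fin k × Fin n × Fin n)} (h : CircNonAtt n k R) (i : Fin k) :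
    Disjoint (rowsOf R i) (colsOf R (nxt i)) := by
  rw [Finset.disjoint_left]
  rintro x hx hx'
  simp only [rowsOf, colsOf, bd, Finset.mem_image, Finset.mem_filter] at hx hx'
  obtain ⟨r, ⟨hr, hri⟩, hrx⟩ := hx
  obtain ⟨s, ⟨hs, hsi⟩, hsx⟩ := hx'
  exact circ_cross h hr hs (hsi.trans (by rw [hri])) (hrx.trans hsx.symm)

lemma sum_bd {R : Finset (Fin k × Fin n × Fin n)} :
    ∑ i : Fin k, (bd R i).card = R.card := by
  rw [← Finset.card_biUnion]
  · congr 1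
    ext r
    simp only [Finset.mem_biUnion, bd, Finset.mem_filter, Finset.mem_univ, true_and]
    constructor
    · rintro ⟨i, hi, -⟩; exact hi
    · intro h; exact ⟨r.1, h, rfl⟩
  · intro i _ j _ hij
    rw [Function.onFun, Finset.disjoint_left]
    intro r hr hr'
    simp only [bd, Finset.mem_filter] at hr hr'
    exact hij (hr.2 ▸ hr'.2 ▸ rfl)

end CircRook

namespace CircRook
variable {n k m : ℕ}

lemma nxt_iterate_val : ∀ (t : ℕ) (i : Fin k), ((nxt^[t] i : Fin k) : ℕ) = ((i : ℕ) + t) % k := by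
  intro t
  induction t with
  | zero => intro i; simp [Nat.mod_eq_of_lt i.isLt]
  | succ t ih =>
    intro i
    rw [Function.iterate_succ_apply, ih (nxt i)]
    show (((i : ℕ) + 1) % k + t) % k = _
    rw [Nat.mod_add_mod, Nat.add_assoc, Nat.add_comm 1 t]

lemma nxt_iterate_k (i : Fin k) : nxt^[k] i = i := by
  apply Fin.ext
  rw [nxt_iterate_val, Nat.add_mod_right, Nat.mod_eq_of_lt i.isLt]

lemma bd_card_eq (hm : m + m = n) (hko : Odd k)
    {R : Finset (Fin k × Fin n × Fin n)} (h : CircNonAtt n k R) (hcard : R.card = m * k)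
    (i : Fin k) : (bd R i).card = m := by
  set b : Fin k → ℕ := fun i => (bd R i).card with hb
  -- pairwise bound
  have hle : ∀ i : Fin k, b i + b (nxt i) ≤ n := by
    intro i
    have h1 := card_rowsOf h i
    have h2 := card_colsOf h (nxt i)
    have h3 : (rowsOf R i ∪ colsOf R (nxt i)).card = b i + b (nxt i) := by
      rw [Finset.card_union_of_disjoint (rows_cols_disj h i), h1, h2]
    calc b i + b (nxt i) = (rowsOf R i ∪ colsOf R (nxt i)).card := h3.symm
      _ ≤ Fintype.card (Fin n) := Finset.card_le_univ _
      _ = n := Fintype.card_fin n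
  -- sum over nxt equals sum
  have hbij : Function.Bijective (nxt : Fin k → Fin k) :=
    Function.bijective_iff_has_inverse.2 ⟨prv, prv_nxt, nxt_prv⟩
  have hsum1 : ∑ i : Fin k, b (nxt i) = ∑ i : Fin k, b i :=
    Function.Bijective.sum_comp hbij b
  have hsum : ∑ i : Fin k, (b i + b (nxt i)) = n * k := by
    rw [Finset.sum_add_distrib, hsum1, sum_bd, hcard]
    cases hm; ring
  -- all pair sums equal n
  have hpair : ∀ i : Fin k, b i + b (nxt i) = n := by
    by_contra hcon
    push_neg at hcon
    obtain ⟨i0, hi0⟩ := hcon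
    have hlt : ∑ i : Fin k, (b i + b (nxt i)) < ∑ _i : Fin k, n := by
      apply Finset.sum_lt_sum (fun i _ => hle i)
      exact ⟨i0, Finset.mem_univ _, lt_of_le_of_ne (hle i0) hi0⟩
    rw [hsum, Finset.sum_const, Finset.card_univ, Fintype.card_fin, smul_eq_mul,
      Nat.mul_comm] at hlt
    exact lt_irrefl _ hlt
  -- invariance under nxt²
  have h2step : ∀ i : Fin k, b (nxt (nxt i)) = b i := by
    intro i
    have := hpair i
    have := hpair (nxt i)
    omega
  have hiter : ∀ (t : ℕ) (i : Fin k), b (nxt^[2 * t] i) = b i := by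
    intro t
    induction t with
    | zero => intro i; rfl
    | succ t ih =>
      intro i
      have : 2 * (t + 1) = 2 * t + 2 := by ring
      rw [this, Function.iterate_add_apply]
      rw [ih]
      exact h2step i
  -- b is constant along nxt
  have hnxt : ∀ i : Fin k, b (nxt i) = b i := by
    intro i
    obtain ⟨t, ht⟩ := hko
    have hk1 : k + 1 = 2 * (t + 1) := by omega
    calc b (nxt i) = b (nxt^[k + 1] i) := by
          rw [Function.iterate_add_apply, Function.iterate_one, nxt_iterate_k]
      _ = b i := by rw [hk1, hiter]
  have h1 := hpair i
  have h2 := hnxt i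
  show b i = m
  omega

lemma cols_eq_compl (hm : m + m = n) (hko : Odd k)
    {R : Finset (Fin k × Fin n × Fin n)} (h : CircNonAtt n k R) (hcard : R.card = m * k)
    (i : Fin k) : colsOf R (nxt i) = (rowsOf R i)ᶜ := by
  have h1 : (rowsOf R i).card = m := by rw [card_rowsOf h, bd_card_eq hm hko h hcard]
  have h2 : (colsOf R (nxt i)).card = m := by rw [card_colsOf h, bd_card_eq hm hko h hcard]
  apply Finset.eq_of_subset_of_card_le
  · intro x hx
    rw [Finset.mem_compl]
    intro hx'
    exact (Finset.disjoint_right.1 (rows_cols_disj h i)) hx hx'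
  · rw [h2, Finset.card_compl, h1, Fintype.card_fin]
    omega

end CircRook

namespace CircRook
variable {n k m : ℕ}

def rowS (ψ : Fin k → (Fin m ↪ Fin n)) (i : Fin k) : Finset (Fin n) :=
  Finset.univ.image (ψ i)

lemma card_rowS (ψ : Fin k → (Fin m ↪ Fin n)) (i : Fin k) : (rowS ψ i).card = m := by
  rw [rowS, Finset.card_image_of_injective _ (ψ i).injective, Finset.card_univ, Fintype.card_fin]

def colS (ψ : Fin k → (Fin m ↪ Fin n)) (i : Fin k) : Finset (Fin n) :=
  (rowS ψ (prv i))ᶜ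

lemma card_colS (hm : m + m = n) (ψ : Fin k → (Fin m ↪ Fin n)) (i : Fin k) :
    (colS ψ i).card = m := by
  rw [colS, Finset.card_compl, card_rowS, Fintype.card_fin]; omega

def enum (hm : m + m = n) (ψ : Fin k → (Fin m ↪ Fin n)) (i : Fin k) (j : Fin m) : Fin n :=
  ((colS ψ i).orderIsoOfFin (card_colS hm ψ i) j : Fin n)

lemma orderIsoOfFin_congr {α : Type*} [LinearOrder α] {s t : Finset α}
    (hst : s = t) (hs : s.card = m) (ht : t.card = m) (j : Fin m) :
    (s.orderIsoOfFin hs j : α) = (t.orderIsoOfFin ht j : α) := by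
  subst hst; rfl

lemma enum_mem (hm : m + m = n) (ψ : Fin k → (Fin m ↪ Fin n)) (i : Fin k) (j : Fin m) :
    enum hm ψ i j ∈ colS ψ i :=
  ((colS ψ i).orderIsoOfFin (card_colS hm ψ i) j).2

lemma enum_inj (hm : m + m = n) (ψ : Fin k → (Fin m ↪ Fin n)) (i : Fin k) :
    Function.Injective (enum hm ψ i) := by
  intro a b hab
  exact ((colS ψ i).orderIsoOfFin (card_colS hm ψ i)).injective (Subtype.coe_injective hab)

def Fmap (hm : m + m = n) (ψ : Fin k → (Fin m ↪ Fin n)) : Finset (Fin k × Fin n × Fin n) :=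
  Finset.univ.image fun p : Fin k × Fin m => (p.1, ψ p.1 p.2, enum hm ψ p.1 p.2)

lemma mem_Fmap (hm : m + m = n) (ψ : Fin k → (Fin m ↪ Fin n))
    {x : Fin k × Fin n × Fin n} :
    x ∈ Fmap hm ψ ↔ ∃ j : Fin m, ψ x.1 j = x.2.1 ∧ enum hm ψ x.1 j = x.2.2 := by
  simp only [Fmap, Finset.mem_image, Finset.mem_univ, true_and]
  constructor
  · rintro ⟨p, hp⟩
    refine ⟨p.2, ?_, ?_⟩
    · rw [← hp]
    · rw [← hp]
  · rintro ⟨j, h1, h2⟩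
    refine ⟨(x.1, j), ?_⟩
    rw [h1, h2]

lemma card_Fmap (hm : m + m = n) (ψ : Fin k → (Fin m ↪ Fin n)) :
    (Fmap hm ψ).card = m * k := by
  rw [Fmap, Finset.card_image_of_injective, Finset.card_univ, Fintype.card_prod,
    Fintype.card_fin, Fintype.card_fin, Nat.mul_comm]
  intro p q hpq
  simp only [Prod.mk.injEq] at hpq
  obtain ⟨h1, h2, -⟩ := hpq
  rw [← h1] at h2
  exact Prod.ext h1 ((ψ p.1).injective h2)

lemma circ_Fmap (hm : m + m = n) (ψ : Fin k → (Fin m ↪ Fin n)) :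
    CircNonAtt n k (Fmap hm ψ) := by
  constructor
  · intro r hr s hs hne h1
    rw [mem_Fmap] at hr hs
    obtain ⟨j, hj1, hj2⟩ := hr
    obtain ⟨j', hj1', hj2'⟩ := hs
    rw [← h1] at hj1' hj2'
    have hjj : j ≠ j' := by
      rintro rfl
      apply hne
      apply Prod.ext h1
      apply Prod.ext
      · rw [← hj1, ← hj1']
      · rw [← hj2, ← hj2']
    constructor
    · rw [← hj1, ← hj1']
      exact fun hc => hjj ((ψ r.1).injective hc)
    · rw [← hj2, ← hj2']
      exact fun hc => hjj (enum_inj hm ψ r.1 hc)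
  · intro r hr s hs h1
    have hs1 : s.1 = nxt r.1 := Fin.ext h1.symm
    rw [mem_Fmap] at hr hs
    obtain ⟨j, hj1, -⟩ := hr
    obtain ⟨j', -, hj2'⟩ := hs
    have hrmem : r.2.1 ∈ rowS ψ r.1 := by
      rw [rowS, Finset.mem_image, ← hj1]
      exact ⟨j, Finset.mem_univ _, rfl⟩
    have hsmem : s.2.2 ∈ colS ψ s.1 := hj2' ▸ enum_mem hm ψ s.1 j'
    rw [colS, hs1, prv_nxt, Finset.mem_compl] at hsmem
    intro hc
    exact hsmem (hc ▸ hrmem)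

lemma rowsOf_Fmap (hm : m + m = n) (ψ : Fin k → (Fin m ↪ Fin n)) (i : Fin k) :
    rowsOf (Fmap hm ψ) i = rowS ψ i := by
  ext x
  simp only [rowsOf, bd, Finset.mem_image, Finset.mem_filter, rowS, Finset.mem_univ, true_and]
  constructor
  · rintro ⟨r, ⟨hr, hri⟩, hx⟩
    rw [mem_Fmap] at hr
    obtain ⟨j, hj1, -⟩ := hr
    exact ⟨j, by rw [← hri, hj1, hx]⟩
  · rintro ⟨j, hj⟩
    refine ⟨(i, ψ i j, enum hm ψ i j), ⟨?_, rfl⟩, hj⟩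
    rw [mem_Fmap]
    exact ⟨j, rfl, rfl⟩

end CircRook

namespace CircRook
variable {n k m : ℕ}

lemma Fmap_injective (hm : m + m = n) :
    Function.Injective (Fmap (k := k) hm) := by
  intro ψ ψ' hF
  have hrow : ∀ i, rowS ψ i = rowS ψ' i := fun i => by
    rw [← rowsOf_Fmap hm ψ i, ← rowsOf_Fmap hm ψ' i, hF]
  have hcol : ∀ i, colS ψ i = colS ψ' i := fun i => by rw [colS, colS, hrow]
  have henum : ∀ i j, enum hm ψ i j = enum hm ψ' i j := fun i j =>
    orderIsoOfFin_congr (hcol i) _ _ j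
  funext i
  apply DFunLike.ext
  intro j
  have hx : ((i, ψ i j, enum hm ψ i j) : Fin k × Fin n × Fin n) ∈ Fmap hm ψ' := by
    rw [← hF, mem_Fmap]; exact ⟨j, rfl, rfl⟩
  rw [mem_Fmap] at hx
  obtain ⟨j', h1, h2⟩ := hx
  have hj : j' = j := enum_inj hm ψ' i (h2.trans (henum i j))
  rw [hj] at h1
  exact h1.symm

lemma Fmap_surj (hm : m + m = n) (hko : Odd k)
    {R : Finset (Fin k × Fin n × Fin n)} (h : CircNonAtt n k R) (hcard : R.card = m * k) :
    ∃ ψ : Fin k → (Fin m ↪ Fin n), Fmap hm ψ = R := by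
  have hc : ∀ i, (colsOf R i).card = m := fun i => by
    rw [card_colsOf h, bd_card_eq hm hko h hcard]
  set eR : Fin k → Fin m → Fin n :=
    fun i j => ((colsOf R i).orderIsoOfFin (hc i) j : Fin n) with heR
  have heRmem : ∀ i j, eR i j ∈ colsOf R i := fun i j =>
    ((colsOf R i).orderIsoOfFin (hc i) j).2
  have hex : ∀ (i : Fin k) (j : Fin m), ∃ r : Fin k × Fin n × Fin n,
      r ∈ R ∧ r.1 = i ∧ r.2.2 = eR i j := by
    intro i j
    have hmem := heRmem i j
    rw [colsOf, Finset.mem_image] at hmem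
    obtain ⟨r, hr, hr2⟩ := hmem
    rw [bd, Finset.mem_filter] at hr
    exact ⟨r, hr.1, hr.2, hr2⟩
  choose f hf1 hf2 hf3 using hex
  have hinj : ∀ i : Fin k, Function.Injective fun j => (f i j).2.1 := by
    intro i j j' hjj
    by_contra hne
    have hfne : f i j ≠ f i j' := by
      intro hcc
      apply hne
      apply ((colsOf R i).orderIsoOfFin (hc i)).injective
      apply Subtype.coe_injective
      show eR i j = eR i j'
      rw [← hf3 i j, ← hf3 i j', hcc]
    exact (h.1 _ (hf1 i j) _ (hf1 i j') hfne ((hf2 i j).trans (hf2 i j').symm)).1 hjj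
  set ψ : Fin k → (Fin m ↪ Fin n) := fun i => ⟨fun j => (f i j).2.1, hinj i⟩ with hψ
  have hrowseq : ∀ i, rowS ψ i = rowsOf R i := by
    intro i
    apply Finset.eq_of_subset_of_card_le
    · intro x hx
      rw [rowS, Finset.mem_image] at hx
      obtain ⟨j, -, hj⟩ := hx
      rw [rowsOf, Finset.mem_image]
      refine ⟨f i j, ?_, hj⟩
      rw [bd, Finset.mem_filter]
      exact ⟨hf1 i j, hf2 i j⟩
    · rw [card_rowS, card_rowsOf h, bd_card_eq hm hko h hcard]
  have hcolseq : ∀ i, colS ψ i = colsOf R i := by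
    intro i
    rw [colS, hrowseq, ← cols_eq_compl hm hko h hcard (prv i), nxt_prv]
  have henum : ∀ i j, enum hm ψ i j = eR i j := fun i j =>
    orderIsoOfFin_congr (hcolseq i) _ _ j
  refine ⟨ψ, ?_⟩
  apply Finset.eq_of_subset_of_card_le
  · intro x hx
    rw [mem_Fmap] at hx
    obtain ⟨j, h1, h2⟩ := hx
    have hxeq : x = f x.1 j := by
      apply Prod.ext (hf2 x.1 j).symm
      apply Prod.ext
      · show x.2.1 = (f x.1 j).2.1
        rw [← h1]; rfl
      · show x.2.2 = (f x.1 j).2.2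
        rw [← h2, henum, hf3]
    rw [hxeq]
    exact hf1 x.1 j
  · rw [card_Fmap, hcard]

end CircRook

theorem circular_max_count_k_odd_n_even (n k : ℕ) (hko : Odd k) (hne : Even n) :
    Nat.card {R : Finset (Fin k × Fin n × Fin n) //
        CircNonAtt n k R ∧ R.card = n * k / 2} =
      (Nat.descFactorial n (n / 2)) ^ k := by
  obtain ⟨m, hm⟩ := hne
  have hm' : m + m = n := hm.symm
  have hnk : n * k / 2 = m * k := by
    rw [hm, show (m + m) * k = 2 * (m * k) by ring, Nat.mul_div_cancel_left]
    norm_num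
  have hn2 : n / 2 = m := by omega
  rw [hn2]
  simp only [hnk]
  have hbij : Function.Bijective (fun ψ : Fin k → (Fin m ↪ Fin n) =>
      (⟨CircRook.Fmap hm' ψ, CircRook.circ_Fmap hm' ψ, CircRook.card_Fmap hm' ψ⟩ :
        {R : Finset (Fin k × Fin n × Fin n) // CircNonAtt n k R ∧ R.card = m * k})) := by
    constructor
    · intro ψ ψ' hpq
      exact CircRook.Fmap_injective hm' (congrArg Subtype.val hpq)
    · rintro ⟨R, hna, hcard⟩
      obtain ⟨ψ, hψ⟩ := CircRook.Fmap_surj hm' hko hna hcard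
      exact ⟨ψ, Subtype.ext hψ⟩
  rw [← Nat.card_eq_of_bijective _ hbij, Nat.card_eq_fintype_card, Fintype.card_fun,
    Fintype.card_embedding_eq, Fintype.card_fin, Fintype.card_fin, Fintype.card_fin]
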